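/- Let u ≥ 1 and let F : Fin u → ℕ be a frequency vector with total N = ∑ i, F i. Suppose i₀ attains the minimum of F and j₀ attains the maximum of F (i.e., F i₀ ≤ F l ≤ F j₀ for all l), and that F j₀ ≥ F i₀ + 2. Let F' : Fin u → ℕ be defined by F' i₀ = F i₀ + 1, F' j₀ = F j₀ − 1, and F' l = F l for all other l. Then ∑ i, F' i = N and H(F') > H(F). (Lemma 1: decreasing f_max by one and increasing f_min by one strictly increases the population entropy whenever C = f_max − f_min ≥ 2.) -/

import Mathlib

open Finset in
lemma concave_shift_aux {f : ℝ → ℝ} (hf : StrictConcaveOn ℝ (Set.Ici 0) f)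
    {x y d : ℝ} (hx : 0 ≤ x) (hd : 0 < d) (h : x + d ≤ y - d) :
    f x + f y < f (x + d) + f (y - d) := by
  have hxy : x < y := by linarith
  have hyx : 0 < y - x := by linarith
  set t := d / (y - x) with ht
  have ht0 : 0 < t := div_pos hd hyx
  have ht1 : t < 1 := by rw [ht, div_lt_one hyx]; linarith
  have htd : t * (y - x) = d := by rw [ht]; field_simp
  have hmemx : x ∈ Set.Ici (0:ℝ) := hx
  have hmemy : y ∈ Set.Ici (0:ℝ) := Set.mem_Ici.2 (by linarith)
  have h1 := hf.2 hmemx hmemy (ne_of_lt hxy) (by linarith : (0:ℝ) < 1 - t) ht0 (by ring)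
  have h2 := hf.2 hmemx hmemy (ne_of_lt hxy) ht0 (by linarith : (0:ℝ) < 1 - t) (by ring)
  have e1 : (1 - t) • x + t • y = x + d := by
    simp only [smul_eq_mul]; nlinarith [htd]
  have e2 : t • x + (1 - t) • y = y - d := by
    simp only [smul_eq_mul]; nlinarith [htd]
  rw [e1] at h1; rw [e2] at h2
  simp only [smul_eq_mul] at h1 h2
  linarith

open Finset in
/-- Lemma 1: decreasing `f_max` by one and increasing `f_min` by one strictly
increases the population entropy whenever `C = f_max − f_min ≥ 2`. -/
theorem entropy_increase_of_balance (u : ℕ) (hu : 1 ≤ u) (F : Fin u → ℕ) (N : ℕ)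
    (hN : N = ∑ i, F i) (i₀ j₀ : Fin u)
    (hmin : ∀ l, F i₀ ≤ F l) (hmax : ∀ l, F l ≤ F j₀)
    (hC : F i₀ + 2 ≤ F j₀)
    (F' : Fin u → ℕ)
    (hFi : F' i₀ = F i₀ + 1) (hFj : F' j₀ = F j₀ - 1)
    (hFo : ∀ l, l ≠ i₀ → l ≠ j₀ → F' l = F l) :
    (∑ i, F' i = N) ∧
      ∑ i, Real.negMulLog ((F i : ℝ) / N) < ∑ i, Real.negMulLog ((F' i : ℝ) / N) := by
  have hne : i₀ ≠ j₀ := by intro h; rw [h] at hC; omega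
  have hj1 : 1 ≤ F j₀ := by omega
  have hNpos : 0 < N := by
    have := Finset.single_le_sum (f := F) (fun i _ => Nat.zero_le _)
      (Finset.mem_univ j₀)
    omega
  have hjmem : j₀ ∈ (Finset.univ : Finset (Fin u)).erase i₀ :=
    Finset.mem_erase.2 ⟨Ne.symm hne, Finset.mem_univ _⟩
  set s := ((Finset.univ : Finset (Fin u)).erase i₀).erase j₀ with hs
  have hsplit : ∀ {M : Type} [AddCommMonoid M] (g : Fin u → M),
      ∑ i, g i = g i₀ + (g j₀ + ∑ i ∈ s, g i) := by
    intro M _ g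
    rw [← Finset.add_sum_erase _ g (Finset.mem_univ i₀), ← Finset.add_sum_erase _ g hjmem]
  have hrest : ∀ l ∈ s, F' l = F l := by
    intro l hl
    simp only [hs, Finset.mem_erase] at hl
    exact hFo l hl.2.1 hl.1
  constructor
  · have h1 := hsplit F
    have h2 := hsplit F'
    have h3 : ∑ i ∈ s, F' i = ∑ i ∈ s, F i := Finset.sum_congr rfl hrest
    omega
  · rw [hsplit (fun i => Real.negMulLog ((F i : ℝ) / N)),
      hsplit (fun i => Real.negMulLog ((F' i : ℝ) / N))]
    have hrest' : ∑ i ∈ s, Real.negMulLog ((F' i : ℝ) / N)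
        = ∑ i ∈ s, Real.negMulLog ((F i : ℝ) / N) :=
      Finset.sum_congr rfl (fun l hl => by rw [hrest l hl])
    rw [hrest']
    have hNr : (0:ℝ) < N := by exact_mod_cast hNpos
    have hcast_i : ((F' i₀ : ℝ)) = (F i₀ : ℝ) + 1 := by rw [hFi]; push_cast; ring
    have hcast_j : ((F' j₀ : ℝ)) = (F j₀ : ℝ) - 1 := by
      rw [hFj]; push_cast [hj1]; ring
    rw [hcast_i, hcast_j]
    have key := concave_shift_aux Real.strictConcaveOn_negMulLog
      (x := (F i₀ : ℝ) / N) (y := (F j₀ : ℝ) / N) (d := 1 / N)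
      (by positivity) (by positivity)
      (by
        rw [← add_div, div_sub_div_same, div_le_div_iff_of_pos_right hNr]
        have : (F i₀ : ℝ) + 2 ≤ (F j₀ : ℝ) := by exact_mod_cast hC
        linarith)
    rw [← add_div, div_sub_div_same] at key
    linarith [key]
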